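/- Every nonzero ideal I ⊆ k[X_1,...,X_m], for a fixed monomial order, has a Groebner basis; moreover any Groebner basis of I generates I. -/

import Mathlib

open MvPolynomial

variable {σ K : Type*}

/-- The leading (multidegree) exponent of a polynomial with respect to a monomial order:
the maximum, for the order, of the exponents appearing in `f`. -/
noncomputable def leadExp [Field K] (m : MonomialOrder σ) (f : MvPolynomial σ K) :
    σ →₀ ℕ :=
  m.toSyn.symm (f.support.sup fun d => m.toSyn d)

/-- The leading term of a polynomial with respect to a monomial order. -/
noncomputable def leadTerm [Field K] (m : MonomialOrder σ) (f : MvPolynomial σ K) :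
    MvPolynomial σ K :=
  monomial (leadExp m f) (f.coeff (leadExp m f))

/-- `G` is a Groebner basis of the ideal `I` for the monomial order `m`:
a finite subset of `I` whose leading terms generate the same ideal as the leading
terms of all (nonzero) elements of `I`. -/
def IsGroebnerBasis [Field K] (m : MonomialOrder σ) (I : Ideal (MvPolynomial σ K))
    (G : Set (MvPolynomial σ K)) : Prop :=
  G.Finite ∧ G ⊆ (I : Set (MvPolynomial σ K)) ∧
    Ideal.span (leadTerm m '' G) =
      Ideal.span (leadTerm m '' {f | f ∈ I ∧ f ≠ 0})

/-- `r` is a remainder of `f` on division by `G` (relative to the ideal `I`):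
`f - r ∈ I` and no monomial of `r` is divisible by the leading monomial of any
nonzero element of `G`. -/
def IsRemainder [Field K] (m : MonomialOrder σ) (I : Ideal (MvPolynomial σ K))
    (G : Set (MvPolynomial σ K)) (f r : MvPolynomial σ K) : Prop :=
  f - r ∈ I ∧
    ∀ c ∈ r.support, ∀ g ∈ G, g ≠ 0 → ¬ leadExp m g ≤ c

section Aux

variable [Field K] (m : MonomialOrder σ)

lemma toSyn_leadExp (f : MvPolynomial σ K) :
    m.toSyn (leadExp m f) = f.support.sup fun d => m.toSyn d := by
  simp [leadExp]

lemma le_toSyn_leadExp {f : MvPolynomial σ K} {d : σ →₀ ℕ} (hd : d ∈ f.support) :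
    m.toSyn d ≤ m.toSyn (leadExp m f) := by
  rw [toSyn_leadExp]; exact Finset.le_sup hd

lemma leadExp_mem_support {f : MvPolynomial σ K} (hf : f ≠ 0) :
    leadExp m f ∈ f.support := by
  obtain ⟨b, hb, he⟩ := f.support.exists_mem_eq_sup
    (MvPolynomial.support_nonempty.mpr hf) (fun d => m.toSyn d)
  have : leadExp m f = b := by
    rw [leadExp, he]; exact m.toSyn.symm_apply_apply b
  rwa [this]

lemma coeff_leadExp_ne_zero {f : MvPolynomial σ K} (hf : f ≠ 0) :
    f.coeff (leadExp m f) ≠ 0 :=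
  MvPolynomial.mem_support_iff.mp (leadExp_mem_support m hf)

/-- Any monomial of an element of the ideal generated by the leading terms of `G` is
divisible by the leading monomial of some nonzero element of `G`. -/
lemma exists_leadExp_le {G : Set (MvPolynomial σ K)} {p : MvPolynomial σ K}
    (hp : p ∈ Ideal.span (leadTerm m '' G)) :
    ∀ a ∈ p.support, ∃ g ∈ G, g ≠ 0 ∧ leadExp m g ≤ a := by
  classical
  refine Submodule.span_induction ?_ ?_ ?_ ?_ hp
  · rintro x ⟨g, hg, rfl⟩ a ha
    by_cases hg0 : g = 0
    · exfalso
      simp [leadTerm, hg0] at ha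
    · refine ⟨g, hg, hg0, ?_⟩
      have := MvPolynomial.support_monomial_subset
        (s := leadExp m g) (a := g.coeff (leadExp m g)) ha
      rw [Finset.mem_singleton] at this
      rw [this]
  · intro a ha
    simp at ha
  · intro x y _ _ hx hy a ha
    have := MvPolynomial.support_add (p := x) (q := y) ha
    rcases Finset.mem_union.mp this with h | h
    · exact hx a h
    · exact hy a h
  · intro r x _ hx a ha
    have ha' : a ∈ (r * x).support := ha
    have := MvPolynomial.support_mul r x ha'
    rw [Finset.mem_add] at this
    obtain ⟨b, hb, c, hc, rfl⟩ := this
    obtain ⟨g, hgG, hg0, hle⟩ := hx c hc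
    exact ⟨g, hgG, hg0, hle.trans le_add_self⟩

/-- Every element of `I` lies in the span of a Gröbner basis of `I`. -/
lemma mem_span_of_groebner {I : Ideal (MvPolynomial σ K)}
    {G : Set (MvPolynomial σ K)} (hGI : G ⊆ (I : Set (MvPolynomial σ K)))
    (hspan : Ideal.span (leadTerm m '' G) =
      Ideal.span (leadTerm m '' {f | f ∈ I ∧ f ≠ 0})) :
    ∀ f ∈ I, f ∈ Ideal.span G := by
  classical
  suffices H : ∀ s : m.syn, ∀ f : MvPolynomial σ K, f ∈ I →
      m.toSyn (leadExp m f) = s → f ∈ Ideal.span G from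
    fun f hf => H _ f hf rfl
  intro s
  induction s using WellFoundedLT.induction with
  | _ s IH =>
    intro f hfI hfs
    by_cases hf0 : f = 0
    · simp [hf0]
    · have hlt : leadTerm m f ∈ Ideal.span (leadTerm m '' G) := by
        rw [hspan]; exact Ideal.subset_span ⟨f, ⟨hfI, hf0⟩, rfl⟩
      have hsupp : leadExp m f ∈ (leadTerm m f).support := by
        rw [leadTerm, MvPolynomial.support_monomial]
        simp [coeff_leadExp_ne_zero m hf0]
      obtain ⟨g, hgG, hg0, hle⟩ := exists_leadExp_le m hlt (leadExp m f) hsupp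
      set q : MvPolynomial σ K :=
        MvPolynomial.monomial (leadExp m f - leadExp m g)
          (f.coeff (leadExp m f) / g.coeff (leadExp m g)) with hq
      have hadd : (leadExp m f - leadExp m g) + leadExp m g = leadExp m f := by
        rw [tsub_add_cancel_of_le hle]
      have hcoeff : (q * g).coeff (leadExp m f) = f.coeff (leadExp m f) := by
        have h := MvPolynomial.coeff_monomial_mul (leadExp m g)
          (leadExp m f - leadExp m g)
          (f.coeff (leadExp m f) / g.coeff (leadExp m g)) g
        rw [hadd] at h
        rw [hq, h, div_mul_cancel₀ _ (coeff_leadExp_ne_zero m hg0)]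
      have hsupQG : ∀ a ∈ (q * g).support, m.toSyn a ≤ m.toSyn (leadExp m f) := by
        intro a ha
        have := MvPolynomial.support_mul q g ha
        rw [Finset.mem_add] at this
        obtain ⟨b, hb, c, hc, rfl⟩ := this
        have hb' : b = leadExp m f - leadExp m g := by
          have := MvPolynomial.support_monomial_subset hb
          rwa [Finset.mem_singleton] at this
        calc m.toSyn (b + c) = m.toSyn b + m.toSyn c := map_add _ _ _
          _ ≤ m.toSyn b + m.toSyn (leadExp m g) :=
              add_le_add_right (le_toSyn_leadExp m hc) _
          _ = m.toSyn (b + leadExp m g) := (map_add _ _ _).symm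
          _ = m.toSyn (leadExp m f) := by rw [hb', hadd]
      have hqgspan : q * g ∈ Ideal.span G :=
        Ideal.mul_mem_left _ _ (Ideal.subset_span hgG)
      set f' := f - q * g with hf'
      by_cases hf'0 : f' = 0
      · have : f = q * g := by
          have := sub_eq_zero.mp hf'0; exact this
        rw [this]; exact hqgspan
      · have hsupf' : ∀ a ∈ f'.support, m.toSyn a < m.toSyn (leadExp m f) := by
          intro a ha
          have hne : a ≠ leadExp m f := by
            intro h
            have : f'.coeff (leadExp m f) = 0 := by
              rw [hf', MvPolynomial.coeff_sub, hcoeff, sub_self]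
            rw [h] at ha
            exact MvPolynomial.mem_support_iff.mp ha this
          have hle' : m.toSyn a ≤ m.toSyn (leadExp m f) := by
            have := MvPolynomial.support_sub σ f (q * g) ha
            rcases Finset.mem_union.mp this with h | h
            · exact le_toSyn_leadExp m h
            · exact hsupQG a h
          exact lt_of_le_of_ne hle' (fun h => hne (m.toSyn.injective h))
        have hlt' : m.toSyn (leadExp m f') < s := by
          rw [← hfs]
          exact hsupf' _ (leadExp_mem_support m hf'0)
        have hf'I : f' ∈ I :=
          I.sub_mem hfI (Ideal.mul_mem_left _ _ (hGI hgG))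
        have hmem := IH _ hlt' f' hf'I rfl
        have : f = f' + q * g := by rw [hf']; ring
        rw [this]
        exact Ideal.add_mem _ hmem hqgspan

/-- In a Noetherian ring, the span of any set equals the span of a finite subset. -/
lemma exists_finset_subset_span_eq {R : Type*} [CommRing R] [IsNoetherianRing R]
    (S : Set R) :
    ∃ T : Finset R, ↑T ⊆ S ∧ Ideal.span (T : Set R) = Ideal.span S := by
  classical
  obtain ⟨U, hU⟩ := IsNoetherian.noetherian (Ideal.span S)
  have hmem : ∀ u ∈ U, ∃ T' : Finset R, ↑T' ⊆ S ∧ u ∈ Ideal.span (T' : Set R) := by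
    intro u hu
    have : u ∈ Ideal.span S := by
      rw [← hU]; exact Ideal.subset_span hu
    obtain ⟨T', h1, h2⟩ := Submodule.mem_span_finite_of_mem_span this
    exact ⟨T', h1, h2⟩
  choose! T' hT'1 hT'2 using hmem
  refine ⟨U.biUnion T', ?_, ?_⟩
  · intro x hx
    simp only [Finset.coe_biUnion, Set.mem_iUnion] at hx
    obtain ⟨u, hu, hx⟩ := hx
    exact hT'1 u hu hx
  · refine le_antisymm (Ideal.span_mono ?_) ?_
    · intro x hx
      simp only [Finset.coe_biUnion, Set.mem_iUnion] at hx
      obtain ⟨u, hu, hx⟩ := hx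
      exact hT'1 u hu hx
    · rw [← hU, Submodule.span_le]
      intro u hu
      exact Ideal.span_mono (by
        intro x hx
        simp only [Finset.coe_biUnion, Set.mem_iUnion]
        exact ⟨u, hu, hx⟩) (hT'2 u hu)

end Aux

/-- every nonzero ideal of `k[X_1,…,X_m]` has a Groebner basis, and any
Groebner basis of `I` generates `I`. -/
theorem groebner_basis_exists_and_spans [Field K] {n : ℕ} (m : MonomialOrder (Fin n))
    (I : Ideal (MvPolynomial (Fin n) K)) (hI : I ≠ ⊥) :
    (∃ G : Set (MvPolynomial (Fin n) K), IsGroebnerBasis m I G) ∧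
    (∀ G : Set (MvPolynomial (Fin n) K), IsGroebnerBasis m I G → Ideal.span G = I) := by
  classical
  constructor
  · -- existence
    obtain ⟨T, hTsub, hTspan⟩ :=
      exists_finset_subset_span_eq (leadTerm m '' {f | f ∈ I ∧ f ≠ 0})
    have hchoice : ∀ t ∈ (T : Set (MvPolynomial (Fin n) K)),
        ∃ f : MvPolynomial (Fin n) K, (f ∈ I ∧ f ≠ 0) ∧ leadTerm m f = t := by
      intro t ht
      obtain ⟨f, hf, hft⟩ := hTsub ht
      exact ⟨f, hf, hft⟩
    choose! φ hφ1 hφ2 using hchoice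
    refine ⟨φ '' ↑T, Set.Finite.image _ T.finite_toSet, ?_, ?_⟩
    · rintro x ⟨t, ht, rfl⟩
      exact (hφ1 t ht).1
    · have himg : leadTerm m '' (φ '' ↑T) = (T : Set (MvPolynomial (Fin n) K)) := by
        rw [Set.image_image]
        have : ∀ t ∈ (T : Set (MvPolynomial (Fin n) K)), leadTerm m (φ t) = t := hφ2
        rw [Set.image_congr this, Set.image_id']
      rw [himg, hTspan]
  · -- spanning
    rintro G ⟨hGfin, hGI, hGspan⟩
    refine le_antisymm ?_ ?_
    · rw [Ideal.span_le]; exact hGI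
    · intro f hf
      exact mem_span_of_groebner m hGI hGspan f hf
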